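/- Assume |V| ≥ 3. Then the route-design polytope P^RDP (the convex hull of S) equals the set of points (x, y, y′, w) in (V → ℝ) × ℝ × ℝ × ℝ satisfying the linear system: ∑_{v∈V} x_v ≥ 2·y′; x_v ≤ y for every v ∈ V; y ≥ y′; w − ∑_{v∈V} x_v + y ≤ 0; ∑_{v∈V} x_v ≥ y + y′; 0 ≤ x_v ≤ 1 for every v ∈ V; 0 ≤ y ≤ 1; 0 ≤ y′ ≤ 1; and w ≥ 0. -/

import Mathlib

set_option maxHeartbeats 1000000


/-- The set `S` of integral feasible points `(x, y, y′, w)` of the route-design problem on an edge: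
`x v ∈ {0,1}`, `y ∈ {0,1}`, `y′ ∈ {0,1}`, `w ≥ 0`, `∑ x v ≥ 2 y′`, `w − ∑ x v + y ≤ 0`,
`x v ≤ y` for all `v`, and `y′ ≤ y`.  Its convex hull is the polytope `P^RDP`. -/
def RDPset (V : Type*) [Fintype V] : Set ((V → ℝ) × ℝ × ℝ × ℝ) :=
  {p | (∀ v, p.1 v = 0 ∨ p.1 v = 1) ∧ (p.2.1 = 0 ∨ p.2.1 = 1) ∧
       (p.2.2.1 = 0 ∨ p.2.2.1 = 1) ∧ 0 ≤ p.2.2.2 ∧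
       2 * p.2.2.1 ≤ ∑ v, p.1 v ∧
       p.2.2.2 - (∑ v, p.1 v) + p.2.1 ≤ 0 ∧
       (∀ v, p.1 v ≤ p.2.1) ∧ p.2.2.1 ≤ p.2.1}

/-- The linear relaxation. -/
def Qset (V : Type*) [Fintype V] : Set ((V → ℝ) × ℝ × ℝ × ℝ) :=
  {p : (V → ℝ) × ℝ × ℝ × ℝ |
        2 * p.2.2.1 ≤ ∑ v, p.1 v ∧
        (∀ v, p.1 v ≤ p.2.1) ∧
        p.2.2.1 ≤ p.2.1 ∧
        p.2.2.2 - (∑ v, p.1 v) + p.2.1 ≤ 0 ∧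
        p.2.1 + p.2.2.1 ≤ ∑ v, p.1 v ∧
        (∀ v, 0 ≤ p.1 v ∧ p.1 v ≤ 1) ∧
        (0 ≤ p.2.1 ∧ p.2.1 ≤ 1) ∧
        (0 ≤ p.2.2.1 ∧ p.2.2.1 ≤ 1) ∧
        0 ≤ p.2.2.2}

section Aux

variable {V : Type*} [Fintype V]

lemma mem_Qset {x : V → ℝ} {y y' w : ℝ}
    (c1 : 2 * y' ≤ ∑ v, x v) (c2 : ∀ v, x v ≤ y) (c3 : y' ≤ y)
    (c4 : w - (∑ v, x v) + y ≤ 0) (c5 : y + y' ≤ ∑ v, x v)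
    (c6 : ∀ v, 0 ≤ x v ∧ x v ≤ 1) (c7a : 0 ≤ y) (c7b : y ≤ 1)
    (c8a : 0 ≤ y') (c8b : y' ≤ 1) (c9 : 0 ≤ w) :
    ((x, y, y', w) : (V → ℝ) × ℝ × ℝ × ℝ) ∈ Qset V :=
  ⟨c1, c2, c3, c4, c5, c6, ⟨c7a, c7b⟩, ⟨c8a, c8b⟩, c9⟩

lemma extreme_pair {E : Type*} [AddCommGroup E] [Module ℝ E] {Q : Set E} {p q r : E}
    (h : p ∈ Q.extremePoints ℝ) (hq : q ∈ Q) (hr : r ∈ Q)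
    (hm : (1/2 : ℝ) • q + (1/2 : ℝ) • r = p) : q = p ∧ r = p :=
  ⟨h.2 hq hr ⟨1/2, 1/2, by norm_num, by norm_num, by norm_num, hm⟩,
    h.2 hr hq ⟨1/2, 1/2, by norm_num, by norm_num, by norm_num, by rw [add_comm]; exact hm⟩⟩

omit [Fintype V] in
lemma sum_zero_one_int (t : Finset V) (x : V → ℝ) (h : ∀ v ∈ t, x v = 0 ∨ x v = 1) :
    ∃ k : ℤ, ∑ v ∈ t, x v = (k : ℝ) := by
  classical
  induction t using Finset.induction_on with
  | empty => exact ⟨0, by simp⟩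
  | @insert a s ha ih =>
    obtain ⟨k, hk⟩ := ih fun v hv => h v (Finset.mem_insert_of_mem hv)
    rcases h a (Finset.mem_insert_self a s) with h0 | h1
    · exact ⟨k, by rw [Finset.sum_insert ha, h0, hk]; ring⟩
    · exact ⟨k + 1, by rw [Finset.sum_insert ha, h1, hk]; push_cast; ring⟩

lemma no_int_frac {k : ℤ} {c : ℝ} (h0 : 0 < c) (h1 : c < 1) (hc : c = (k : ℝ)) : False := by
  rw [hc] at h0 h1
  have h0' : (0 : ℤ) < k := by exact_mod_cast h0
  have h1' : k < 1 := by exact_mod_cast h1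
  omega

lemma sum_add_single [DecidableEq V] (x : V → ℝ) (u : V) (δ : ℝ) :
    ∑ v, (x + (Pi.single u δ : V → ℝ)) v = (∑ v, x v) + δ := by
  classical
  simp [Finset.sum_add_distrib, Finset.sum_pi_single']

lemma sum_sub_single [DecidableEq V] (x : V → ℝ) (u : V) (δ : ℝ) :
    ∑ v, (x - (Pi.single u δ : V → ℝ)) v = (∑ v, x v) - δ := by
  classical
  simp [Finset.sum_sub_distrib, Finset.sum_pi_single']


lemma add_single_apply_same [DecidableEq V] (x : V → ℝ) (u : V) (δ : ℝ) :
    (x + (Pi.single u δ : V → ℝ)) u = x u + δ := by simp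

lemma add_single_apply_ne [DecidableEq V] (x : V → ℝ) {u v : V} (h : v ≠ u) (δ : ℝ) :
    (x + (Pi.single u δ : V → ℝ)) v = x v := by simp [Pi.single_eq_of_ne h]

lemma sub_single_apply_same [DecidableEq V] (x : V → ℝ) (u : V) (δ : ℝ) :
    (x - (Pi.single u δ : V → ℝ)) u = x u - δ := by simp

lemma sub_single_apply_ne [DecidableEq V] (x : V → ℝ) {u v : V} (h : v ≠ u) (δ : ℝ) :
    (x - (Pi.single u δ : V → ℝ)) v = x v := by simp [Pi.single_eq_of_ne h]

lemma half_mid (x dx : V → ℝ) (y dy y' dy' w dw : ℝ) :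
    (1/2 : ℝ) • ((x + dx, y + dy, y' + dy', w + dw) : (V → ℝ) × ℝ × ℝ × ℝ)
      + (1/2 : ℝ) • ((x - dx, y - dy, y' - dy', w - dw) : (V → ℝ) × ℝ × ℝ × ℝ)
      = (x, y, y', w) := by
  simp only [Prod.smul_mk, Prod.mk_add_mk, smul_eq_mul, Prod.mk.injEq]
  refine ⟨?_, by ring, by ring, by ring⟩
  funext v
  simp only [Pi.add_apply, Pi.smul_apply, Pi.sub_apply, smul_eq_mul]
  ring


lemma single_pert_bounds [DecidableEq V] {x : V → ℝ} {u : V} {δ : ℝ}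
    (hb : ∀ v, 0 ≤ x v ∧ x v ≤ 1) (h1 : δ ≤ x u) (h2 : δ ≤ 1 - x u) (hδ : 0 ≤ δ) :
    (∀ v, 0 ≤ (x + (Pi.single u δ : V → ℝ)) v ∧ (x + (Pi.single u δ : V → ℝ)) v ≤ 1) ∧
    (∀ v, 0 ≤ (x - (Pi.single u δ : V → ℝ)) v ∧ (x - (Pi.single u δ : V → ℝ)) v ≤ 1) := by
  constructor <;> intro v <;> rcases eq_or_ne v u with rfl | hv
  · rw [add_single_apply_same]
    exact ⟨by linarith [(hb v).1], by linarith⟩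
  · rw [add_single_apply_ne x hv]; exact hb v
  · rw [sub_single_apply_same]
    exact ⟨by linarith, by linarith [(hb v).2]⟩
  · rw [sub_single_apply_ne x hv]; exact hb v

set_option maxHeartbeats 2000000 in
lemma ext_subset (V : Type*) [Fintype V] : (Qset V).extremePoints ℝ ⊆ RDPset V := by
  classical
  rintro ⟨x, y, y', w⟩ hp
  have hmem := hp.1
  simp only [Qset, Set.mem_setOf_eq] at hmem
  obtain ⟨c1, c2, c3, c4, c5, c6, ⟨c7a, c7b⟩, ⟨c8a, c8b⟩, c9⟩ := hmem
  -- Step 1 : y is 0 or 1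
  have hy01 : y = 0 ∨ y = 1 := by
    rcases eq_or_lt_of_le c7a with h0 | h0
    · exact Or.inl h0.symm
    rcases eq_or_lt_of_le c7b with h1 | h1
    · exact Or.inr h1
    exfalso
    have hq : ((fun v => y * x v, y * y, y * y', y * w) : (V → ℝ) × ℝ × ℝ × ℝ) ∈ Qset V := by
      refine mem_Qset ?_ (fun v => ?_) ?_ ?_ ?_ (fun v => ⟨?_, ?_⟩) ?_ ?_ ?_ ?_ ?_ <;>
          (try simp only [← Finset.mul_sum])
      · nlinarith [mul_le_mul_of_nonneg_left c1 c7a]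
      · nlinarith [mul_le_mul_of_nonneg_left (c2 v) c7a]
      · nlinarith [mul_le_mul_of_nonneg_left c3 c7a]
      · nlinarith [mul_le_mul_of_nonneg_left c4 c7a]
      · nlinarith [mul_le_mul_of_nonneg_left c5 c7a]
      · exact mul_nonneg c7a (c6 v).1
      · nlinarith [mul_le_mul_of_nonneg_left (c2 v) c7a]
      · exact mul_nonneg c7a c7a
      · nlinarith
      · exact mul_nonneg c7a c8a
      · nlinarith [mul_le_mul_of_nonneg_left c3 c7a]
      · exact mul_nonneg c7a c9
    have h2y : (0:ℝ) ≤ 2 - y := by linarith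
    have hr : ((fun v => (2 - y) * x v, (2 - y) * y, (2 - y) * y', (2 - y) * w) :
        (V → ℝ) × ℝ × ℝ × ℝ) ∈ Qset V := by
      refine mem_Qset ?_ (fun v => ?_) ?_ ?_ ?_ (fun v => ⟨?_, ?_⟩) ?_ ?_ ?_ ?_ ?_ <;>
          (try simp only [← Finset.mul_sum])
      · nlinarith [mul_le_mul_of_nonneg_left c1 h2y]
      · nlinarith [mul_le_mul_of_nonneg_left (c2 v) h2y]
      · nlinarith [mul_le_mul_of_nonneg_left c3 h2y]
      · nlinarith [mul_le_mul_of_nonneg_left c4 h2y]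
      · nlinarith [mul_le_mul_of_nonneg_left c5 h2y]
      · exact mul_nonneg h2y (c6 v).1
      · nlinarith [mul_le_mul_of_nonneg_left (c2 v) h2y, sq_nonneg (1 - y)]
      · exact mul_nonneg h2y c7a
      · nlinarith [sq_nonneg (1 - y)]
      · exact mul_nonneg h2y c8a
      · nlinarith [mul_le_mul_of_nonneg_left c3 h2y, sq_nonneg (1 - y)]
      · exact mul_nonneg h2y c9
    have hm : (1/2 : ℝ) • ((fun v => y * x v, y * y, y * y', y * w) : (V → ℝ) × ℝ × ℝ × ℝ)
        + (1/2 : ℝ) • ((fun v => (2 - y) * x v, (2 - y) * y, (2 - y) * y', (2 - y) * w) :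
            (V → ℝ) × ℝ × ℝ × ℝ) = ((x, y, y', w) : (V → ℝ) × ℝ × ℝ × ℝ) := by
      simp only [Prod.smul_mk, Prod.mk_add_mk, smul_eq_mul, Prod.mk.injEq]
      refine ⟨funext fun v => ?_, by ring, by ring, by ring⟩
      simp only [Pi.add_apply, Pi.smul_apply, smul_eq_mul]
      ring
    have hqp := (extreme_pair hp hq hr hm).1
    have hyy := congrArg (fun t : (V → ℝ) × ℝ × ℝ × ℝ => t.2.1) hqp
    simp only at hyy
    nlinarith
  rcases hy01 with hy | hy
  · -- y = 0 : the point is the origin-ish integral point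
    subst hy
    exact ⟨fun v => Or.inl (le_antisymm (c2 v) (c6 v).1), Or.inl rfl,
      Or.inl (le_antisymm c3 c8a), c9, c1, c4, c2, c3⟩
  · subst hy
    -- y = 1
    -- Step 3A : no two distinct fractional coordinates
    have hone : ∀ u u', u ≠ u' → 0 < x u → x u < 1 → 0 < x u' → x u' < 1 → False := by
      intro u u' hne hu0 hu1 hv0 hv1
      set δ := min (min (x u) (1 - x u)) (min (x u') (1 - x u')) with hδdef
      have hδ0 : 0 < δ := by
        simp only [hδdef, lt_min_iff]
        exact ⟨⟨hu0, by linarith⟩, hv0, by linarith⟩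
      have hd1 : δ ≤ x u := le_trans (min_le_left _ _) (min_le_left _ _)
      have hd2 : δ ≤ 1 - x u := le_trans (min_le_left _ _) (min_le_right _ _)
      have hd3 : δ ≤ x u' := le_trans (min_le_right _ _) (min_le_left _ _)
      have hd4 : δ ≤ 1 - x u' := le_trans (min_le_right _ _) (min_le_right _ _)
      set dx : V → ℝ := Pi.single u δ - Pi.single u' δ with hdx
      have hsum : ∑ v, (x + dx) v = ∑ v, x v := by
        simp [hdx, Finset.sum_add_distrib, Finset.sum_sub_distrib, Finset.sum_pi_single']
      have hsum' : ∑ v, (x - dx) v = ∑ v, x v := by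
        simp [hdx, Finset.sum_sub_distrib, Finset.sum_pi_single']
      have hbound : ∀ v, (0 ≤ (x + dx) v ∧ (x + dx) v ≤ 1) ∧
          (0 ≤ (x - dx) v ∧ (x - dx) v ≤ 1) := by
        intro v
        rcases eq_or_ne v u with rfl | hvu
        · have e1 : (x + dx) v = x v + δ := by
            simp [hdx, Pi.single_eq_same, Pi.single_eq_of_ne hne]
            try ring
          have e2 : (x - dx) v = x v - δ := by
            simp [hdx, Pi.single_eq_same, Pi.single_eq_of_ne hne]
            try ring
          rw [e1, e2]
          exact ⟨⟨by linarith, by linarith⟩, by linarith, by linarith⟩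
        rcases eq_or_ne v u' with rfl | hvu'
        · have e1 : (x + dx) v = x v - δ := by
            simp [hdx, Pi.single_eq_same, Pi.single_eq_of_ne hvu]
            try ring
          have e2 : (x - dx) v = x v + δ := by
            simp [hdx, Pi.single_eq_same, Pi.single_eq_of_ne hvu]
            try ring
          rw [e1, e2]
          exact ⟨⟨by linarith, by linarith⟩, by linarith, by linarith⟩
        · have e1 : (x + dx) v = x v := by
            simp [hdx, Pi.single_eq_of_ne hvu, Pi.single_eq_of_ne hvu']
          have e2 : (x - dx) v = x v := by
            simp [hdx, Pi.single_eq_of_ne hvu, Pi.single_eq_of_ne hvu']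
          rw [e1, e2]
          exact ⟨c6 v, c6 v⟩
      have hq : ((x + dx, (1:ℝ) + 0, y' + 0, w + 0) : (V → ℝ) × ℝ × ℝ × ℝ) ∈ Qset V := by
        refine mem_Qset ?_ (fun v => ?_) ?_ ?_ ?_ (fun v => (hbound v).1) ?_ ?_ ?_ ?_ ?_
        · rw [hsum]; linarith
        · have := ((hbound v).1).2; linarith
        · linarith
        · rw [hsum]; linarith
        · rw [hsum]; linarith
        · norm_num
        · norm_num
        · linarith
        · linarith
        · linarith
      have hr : ((x - dx, (1:ℝ) - 0, y' - 0, w - 0) : (V → ℝ) × ℝ × ℝ × ℝ) ∈ Qset V := by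
        refine mem_Qset ?_ (fun v => ?_) ?_ ?_ ?_ (fun v => (hbound v).2) ?_ ?_ ?_ ?_ ?_
        · rw [hsum']; linarith
        · have := ((hbound v).2).2; linarith
        · linarith
        · rw [hsum']; linarith
        · rw [hsum']; linarith
        · norm_num
        · norm_num
        · linarith
        · linarith
        · linarith
      have hqp := (extreme_pair hp hq hr (half_mid x dx 1 0 y' 0 w 0)).1
      have h1 : (x + dx) u = x u := congrFun (congrArg Prod.fst hqp) u
      have h2 : (x + dx) u = x u + δ := by
        simp [hdx, Pi.single_eq_same, Pi.single_eq_of_ne hne]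
        try ring
      rw [h2] at h1
      linarith
    -- Step 3B : all coordinates of x are integral
    have hxint : ∀ v, x v = 0 ∨ x v = 1 := by
      by_contra hcon
      push_neg at hcon
      obtain ⟨u, hu⟩ := hcon
      have hu0 : 0 < x u := lt_of_le_of_ne (c6 u).1 (Ne.symm hu.1)
      have hu1 : x u < 1 := lt_of_le_of_ne (c6 u).2 hu.2
      have hrest : ∀ v, v ≠ u → x v = 0 ∨ x v = 1 := by
        intro v hv
        by_contra hcv
        rw [not_or] at hcv
        exact hone v u hv (lt_of_le_of_ne (c6 v).1 (Ne.symm hcv.1))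
          (lt_of_le_of_ne (c6 v).2 hcv.2) hu0 hu1
      obtain ⟨k, hk⟩ := sum_zero_one_int (Finset.univ.erase u) x
        (fun v hv => hrest v (Finset.ne_of_mem_erase hv))
      have hsplit : ∑ v, x v = x u + (k : ℝ) := by
        rw [← hk, Finset.add_sum_erase _ x (Finset.mem_univ u)]
      have h1strict : 2 * y' < ∑ v, x v := by
        rcases lt_or_eq_of_le c1 with h | h
        · exact h
        exfalso
        have hy'1 : y' = 1 := by linarith
        exact no_int_frac (k := 2 - k) hu0 hu1 (by push_cast; linarith)
      -- the presence of one fractional coordinate is impossible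
      rcases eq_or_lt_of_le c5 with h5 | h5
      · -- 1 + y' = ∑ x
        have hy'0 : 0 < y' := by
          rcases eq_or_lt_of_le c8a with h | h
          · exact absurd (no_int_frac (k := 1 - k) hu0 hu1 (by push_cast; linarith)) not_false
          · exact h
        have hy'1 : y' < 1 := by
          rcases eq_or_lt_of_le c8b with h | h
          · exact absurd (no_int_frac (k := 2 - k) hu0 hu1 (by push_cast; linarith)) not_false
          · exact h
        rcases eq_or_lt_of_le c4 with h4 | h4
        · -- w = ∑ x - 1
          set δ := min (min (x u) (1 - x u)) (min (min y' (1 - y')) ((∑ v, x v) - 2 * y'))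
            with hδdef
          have hδ0 : 0 < δ := by
            simp only [hδdef, lt_min_iff]
            exact ⟨⟨hu0, by linarith⟩, ⟨hy'0, by linarith⟩, by linarith⟩
          have hd1 : δ ≤ x u := le_trans (min_le_left _ _) (min_le_left _ _)
          have hd2 : δ ≤ 1 - x u := le_trans (min_le_left _ _) (min_le_right _ _)
          have hd3 : δ ≤ y' := le_trans (min_le_right _ _) (le_trans (min_le_left _ _) (min_le_left _ _))
          have hd4 : δ ≤ 1 - y' := le_trans (min_le_right _ _) (le_trans (min_le_left _ _) (min_le_right _ _))
          have hd5 : δ ≤ (∑ v, x v) - 2 * y' := le_trans (min_le_right _ _) (min_le_right _ _)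
          obtain ⟨hbp, hbm⟩ := single_pert_bounds c6 hd1 hd2 hδ0.le
          have hsp := sum_add_single x u δ
          have hsm := sum_sub_single x u δ
          have hq : ((x + (Pi.single u δ : V → ℝ), (1:ℝ) + 0, y' + δ, w + δ) :
              (V → ℝ) × ℝ × ℝ × ℝ) ∈ Qset V := by
            refine mem_Qset ?_ (fun v => ?_) ?_ ?_ ?_ hbp ?_ ?_ ?_ ?_ ?_
            · rw [hsp]; linarith
            · have := (hbp v).2; linarith
            · linarith
            · rw [hsp]; linarith
            · rw [hsp]; linarith
            · norm_num
            · norm_num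
            · linarith
            · linarith
            · linarith
          have hr : ((x - (Pi.single u δ : V → ℝ), (1:ℝ) - 0, y' - δ, w - δ) :
              (V → ℝ) × ℝ × ℝ × ℝ) ∈ Qset V := by
            refine mem_Qset ?_ (fun v => ?_) ?_ ?_ ?_ hbm ?_ ?_ ?_ ?_ ?_
            · rw [hsm]; linarith
            · have := (hbm v).2; linarith
            · linarith
            · rw [hsm]; linarith
            · rw [hsm]; linarith
            · norm_num
            · norm_num
            · linarith
            · linarith
            · linarith
          have hqp := (extreme_pair hp hq hr (half_mid x _ 1 0 y' δ w δ)).1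
          have h1 : (x + (Pi.single u δ : V → ℝ)) u = x u :=
            congrFun (congrArg Prod.fst hqp) u
          rw [add_single_apply_same] at h1
          linarith
        · -- w < ∑ x - 1
          set δ := min (min (x u) (1 - x u)) (min (min y' (1 - y'))
            (min ((∑ v, x v) - 2 * y') ((∑ v, x v) - 1 - w))) with hδdef
          have hδ0 : 0 < δ := by
            simp only [hδdef, lt_min_iff]
            exact ⟨⟨hu0, by linarith⟩, ⟨hy'0, by linarith⟩, by linarith, by linarith⟩
          have hd1 : δ ≤ x u := le_trans (min_le_left _ _) (min_le_left _ _)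
          have hd2 : δ ≤ 1 - x u := le_trans (min_le_left _ _) (min_le_right _ _)
          have hd3 : δ ≤ y' := le_trans (min_le_right _ _) (le_trans (min_le_left _ _) (min_le_left _ _))
          have hd4 : δ ≤ 1 - y' := le_trans (min_le_right _ _) (le_trans (min_le_left _ _) (min_le_right _ _))
          have hd5 : δ ≤ (∑ v, x v) - 2 * y' := le_trans (min_le_right _ _) (le_trans (min_le_right _ _) (min_le_left _ _))
          have hd6 : δ ≤ (∑ v, x v) - 1 - w := le_trans (min_le_right _ _) (le_trans (min_le_right _ _) (min_le_right _ _))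
          obtain ⟨hbp, hbm⟩ := single_pert_bounds c6 hd1 hd2 hδ0.le
          have hsp := sum_add_single x u δ
          have hsm := sum_sub_single x u δ
          have hq : ((x + (Pi.single u δ : V → ℝ), (1:ℝ) + 0, y' + δ, w + 0) :
              (V → ℝ) × ℝ × ℝ × ℝ) ∈ Qset V := by
            refine mem_Qset ?_ (fun v => ?_) ?_ ?_ ?_ hbp ?_ ?_ ?_ ?_ ?_
            · rw [hsp]; linarith
            · have := (hbp v).2; linarith
            · linarith
            · rw [hsp]; linarith
            · rw [hsp]; linarith
            · norm_num
            · norm_num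
            · linarith
            · linarith
            · linarith
          have hr : ((x - (Pi.single u δ : V → ℝ), (1:ℝ) - 0, y' - δ, w - 0) :
              (V → ℝ) × ℝ × ℝ × ℝ) ∈ Qset V := by
            refine mem_Qset ?_ (fun v => ?_) ?_ ?_ ?_ hbm ?_ ?_ ?_ ?_ ?_
            · rw [hsm]; linarith
            · have := (hbm v).2; linarith
            · linarith
            · rw [hsm]; linarith
            · rw [hsm]; linarith
            · norm_num
            · norm_num
            · linarith
            · linarith
            · linarith
          have hqp := (extreme_pair hp hq hr (half_mid x _ 1 0 y' δ w 0)).1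
          have h1 : (x + (Pi.single u δ : V → ℝ)) u = x u :=
            congrFun (congrArg Prod.fst hqp) u
          rw [add_single_apply_same] at h1
          linarith
      · -- 1 + y' < ∑ x
        rcases eq_or_lt_of_le c4 with h4 | h4
        · -- w = ∑ x - 1
          set δ := min (min (x u) (1 - x u)) (min ((∑ v, x v) - 2 * y')
            ((∑ v, x v) - 1 - y')) with hδdef
          have hδ0 : 0 < δ := by
            simp only [hδdef, lt_min_iff]
            exact ⟨⟨hu0, by linarith⟩, by linarith, by linarith⟩
          have hd1 : δ ≤ x u := le_trans (min_le_left _ _) (min_le_left _ _)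
          have hd2 : δ ≤ 1 - x u := le_trans (min_le_left _ _) (min_le_right _ _)
          have hd5 : δ ≤ (∑ v, x v) - 2 * y' := le_trans (min_le_right _ _) (min_le_left _ _)
          have hd6 : δ ≤ (∑ v, x v) - 1 - y' := le_trans (min_le_right _ _) (min_le_right _ _)
          obtain ⟨hbp, hbm⟩ := single_pert_bounds c6 hd1 hd2 hδ0.le
          have hsp := sum_add_single x u δ
          have hsm := sum_sub_single x u δ
          have hq : ((x + (Pi.single u δ : V → ℝ), (1:ℝ) + 0, y' + 0, w + δ) :
              (V → ℝ) × ℝ × ℝ × ℝ) ∈ Qset V := by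
            refine mem_Qset ?_ (fun v => ?_) ?_ ?_ ?_ hbp ?_ ?_ ?_ ?_ ?_
            · rw [hsp]; linarith
            · have := (hbp v).2; linarith
            · linarith
            · rw [hsp]; linarith
            · rw [hsp]; linarith
            · norm_num
            · norm_num
            · linarith
            · linarith
            · linarith
          have hr : ((x - (Pi.single u δ : V → ℝ), (1:ℝ) - 0, y' - 0, w - δ) :
              (V → ℝ) × ℝ × ℝ × ℝ) ∈ Qset V := by
            refine mem_Qset ?_ (fun v => ?_) ?_ ?_ ?_ hbm ?_ ?_ ?_ ?_ ?_
            · rw [hsm]; linarith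
            · have := (hbm v).2; linarith
            · linarith
            · rw [hsm]; linarith
            · rw [hsm]; linarith
            · norm_num
            · norm_num
            · linarith
            · linarith
            · linarith
          have hqp := (extreme_pair hp hq hr (half_mid x _ 1 0 y' 0 w δ)).1
          have h1 : (x + (Pi.single u δ : V → ℝ)) u = x u :=
            congrFun (congrArg Prod.fst hqp) u
          rw [add_single_apply_same] at h1
          linarith
        · -- w < ∑ x - 1
          set δ := min (min (x u) (1 - x u)) (min ((∑ v, x v) - 2 * y')
            (min ((∑ v, x v) - 1 - y') ((∑ v, x v) - 1 - w))) with hδdef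
          have hδ0 : 0 < δ := by
            simp only [hδdef, lt_min_iff]
            exact ⟨⟨hu0, by linarith⟩, by linarith, by linarith, by linarith⟩
          have hd1 : δ ≤ x u := le_trans (min_le_left _ _) (min_le_left _ _)
          have hd2 : δ ≤ 1 - x u := le_trans (min_le_left _ _) (min_le_right _ _)
          have hd5 : δ ≤ (∑ v, x v) - 2 * y' := le_trans (min_le_right _ _) (min_le_left _ _)
          have hd6 : δ ≤ (∑ v, x v) - 1 - y' := le_trans (min_le_right _ _) (le_trans (min_le_right _ _) (min_le_left _ _))
          have hd7 : δ ≤ (∑ v, x v) - 1 - w := le_trans (min_le_right _ _) (le_trans (min_le_right _ _) (min_le_right _ _))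
          obtain ⟨hbp, hbm⟩ := single_pert_bounds c6 hd1 hd2 hδ0.le
          have hsp := sum_add_single x u δ
          have hsm := sum_sub_single x u δ
          have hq : ((x + (Pi.single u δ : V → ℝ), (1:ℝ) + 0, y' + 0, w + 0) :
              (V → ℝ) × ℝ × ℝ × ℝ) ∈ Qset V := by
            refine mem_Qset ?_ (fun v => ?_) ?_ ?_ ?_ hbp ?_ ?_ ?_ ?_ ?_
            · rw [hsp]; linarith
            · have := (hbp v).2; linarith
            · linarith
            · rw [hsp]; linarith
            · rw [hsp]; linarith
            · norm_num
            · norm_num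
            · linarith
            · linarith
            · linarith
          have hr : ((x - (Pi.single u δ : V → ℝ), (1:ℝ) - 0, y' - 0, w - 0) :
              (V → ℝ) × ℝ × ℝ × ℝ) ∈ Qset V := by
            refine mem_Qset ?_ (fun v => ?_) ?_ ?_ ?_ hbm ?_ ?_ ?_ ?_ ?_
            · rw [hsm]; linarith
            · have := (hbm v).2; linarith
            · linarith
            · rw [hsm]; linarith
            · rw [hsm]; linarith
            · norm_num
            · norm_num
            · linarith
            · linarith
            · linarith
          have hqp := (extreme_pair hp hq hr (half_mid x _ 1 0 y' 0 w 0)).1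
          have h1 : (x + (Pi.single u δ : V → ℝ)) u = x u :=
            congrFun (congrArg Prod.fst hqp) u
          rw [add_single_apply_same] at h1
          linarith
    -- Step 3C : y' is integral
    have hy'int : y' = 0 ∨ y' = 1 := by
      by_contra hcon
      rw [not_or] at hcon
      have hy'0 : 0 < y' := lt_of_le_of_ne c8a (Ne.symm hcon.1)
      have hy'1 : y' < 1 := lt_of_le_of_ne c8b hcon.2
      obtain ⟨k, hk⟩ := sum_zero_one_int Finset.univ x (fun v _ => hxint v)
      have h1strict : 2 * y' < ∑ v, x v := by
        rcases lt_or_eq_of_le c1 with h | h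
        · exact h
        · exfalso; linarith
      have h5strict : 1 + y' < ∑ v, x v := by
        rcases lt_or_eq_of_le c5 with h | h
        · linarith
        · exact absurd (no_int_frac hy'0 hy'1 (k := k - 1) (by push_cast; linarith)) not_false
      set δ := min (min y' (1 - y')) (min (((∑ v, x v) - 2 * y') / 2)
        ((∑ v, x v) - 1 - y')) with hδdef
      have hδ0 : 0 < δ := by
        simp only [hδdef, lt_min_iff]
        exact ⟨⟨hy'0, by linarith⟩, by linarith, by linarith⟩
      have hd1 : δ ≤ y' := le_trans (min_le_left _ _) (min_le_left _ _)
      have hd2 : δ ≤ 1 - y' := le_trans (min_le_left _ _) (min_le_right _ _)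
      have hd3 : δ ≤ ((∑ v, x v) - 2 * y') / 2 := le_trans (min_le_right _ _) (min_le_left _ _)
      have hd4 : δ ≤ (∑ v, x v) - 1 - y' := le_trans (min_le_right _ _) (min_le_right _ _)
      have hq : ((x, (1:ℝ), y' + δ, w) : (V → ℝ) × ℝ × ℝ × ℝ) ∈ Qset V := by
        refine mem_Qset ?_ (fun v => ?_) ?_ ?_ ?_ c6 ?_ ?_ ?_ ?_ ?_
        · linarith
        · exact (c6 v).2
        · linarith
        · linarith
        · linarith
        · norm_num
        · norm_num
        · linarith
        · linarith
        · linarith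
      have hr : ((x, (1:ℝ), y' - δ, w) : (V → ℝ) × ℝ × ℝ × ℝ) ∈ Qset V := by
        refine mem_Qset ?_ (fun v => ?_) ?_ ?_ ?_ c6 ?_ ?_ ?_ ?_ ?_
        · linarith
        · exact (c6 v).2
        · linarith
        · linarith
        · linarith
        · norm_num
        · norm_num
        · linarith
        · linarith
        · linarith
      have hm : (1/2 : ℝ) • ((x, (1:ℝ), y' + δ, w) : (V → ℝ) × ℝ × ℝ × ℝ)
          + (1/2 : ℝ) • ((x, (1:ℝ), y' - δ, w) : (V → ℝ) × ℝ × ℝ × ℝ)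
          = ((x, (1:ℝ), y', w) : (V → ℝ) × ℝ × ℝ × ℝ) := by
        simp only [Prod.smul_mk, Prod.mk_add_mk, smul_eq_mul, Prod.mk.injEq]
        refine ⟨?_, by norm_num, by ring, by ring⟩
        funext v
        simp only [Pi.add_apply, Pi.smul_apply, smul_eq_mul]
        ring
      have hqp := (extreme_pair hp hq hr hm).1
      have h1 := congrArg (fun t : (V → ℝ) × ℝ × ℝ × ℝ => t.2.2.1) hqp
      simp only at h1
      linarith
    exact ⟨hxint, Or.inr rfl, hy'int, c9, c1, c4, c2, c3⟩

lemma mem_RDPset {V : Type*} [Fintype V] {x : V → ℝ} {y y' w : ℝ}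
    (hx : ∀ v, x v = 0 ∨ x v = 1) (hy : y = 0 ∨ y = 1) (hy' : y' = 0 ∨ y' = 1)
    (hw : 0 ≤ w) (h1 : 2 * y' ≤ ∑ v, x v) (h4 : w - (∑ v, x v) + y ≤ 0)
    (h2 : ∀ v, x v ≤ y) (h3 : y' ≤ y) :
    ((x, y, y', w) : (V → ℝ) × ℝ × ℝ × ℝ) ∈ RDPset V :=
  ⟨hx, hy, hy', hw, h1, h4, h2, h3⟩

lemma Qset_convex (V : Type*) [Fintype V] : Convex ℝ (Qset V) := by
  rintro ⟨px, py, py', pw⟩ hp ⟨qx, qy, qy', qw⟩ hq a b ha hb hab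
  simp only [Qset, Set.mem_setOf_eq] at hp hq
  obtain ⟨p1, p2, p3, p4, p5, p6, ⟨p7a, p7b⟩, ⟨p8a, p8b⟩, p9⟩ := hp
  obtain ⟨q1, q2, q3, q4, q5, q6, ⟨q7a, q7b⟩, ⟨q8a, q8b⟩, q9⟩ := hq
  have hsum : ∑ v, (a • px + b • qx) v = a * (∑ v, px v) + b * (∑ v, qx v) := by
    simp only [Pi.add_apply, Pi.smul_apply, smul_eq_mul, Finset.sum_add_distrib,
      ← Finset.mul_sum]
  show ((a • px + b • qx, a * py + b * qy, a * py' + b * qy', a * pw + b * qw) :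
      (V → ℝ) × ℝ × ℝ × ℝ) ∈ Qset V
  refine mem_Qset ?_ (fun v => ?_) ?_ ?_ ?_ (fun v => ⟨?_, ?_⟩) ?_ ?_ ?_ ?_ ?_
  · rw [hsum]
    nlinarith [mul_le_mul_of_nonneg_left p1 ha, mul_le_mul_of_nonneg_left q1 hb]
  · have : (a • px + b • qx) v = a * px v + b * qx v := rfl
    rw [this]
    nlinarith [mul_le_mul_of_nonneg_left (p2 v) ha, mul_le_mul_of_nonneg_left (q2 v) hb]
  · nlinarith [mul_le_mul_of_nonneg_left p3 ha, mul_le_mul_of_nonneg_left q3 hb]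
  · rw [hsum]
    nlinarith [mul_le_mul_of_nonneg_left p4 ha, mul_le_mul_of_nonneg_left q4 hb]
  · rw [hsum]
    nlinarith [mul_le_mul_of_nonneg_left p5 ha, mul_le_mul_of_nonneg_left q5 hb]
  · have : (a • px + b • qx) v = a * px v + b * qx v := rfl
    rw [this]
    nlinarith [mul_le_mul_of_nonneg_left (p6 v).1 ha, mul_le_mul_of_nonneg_left (q6 v).1 hb]
  · have : (a • px + b • qx) v = a * px v + b * qx v := rfl
    rw [this]
    nlinarith [mul_le_mul_of_nonneg_left (p6 v).2 ha, mul_le_mul_of_nonneg_left (q6 v).2 hb]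
  · nlinarith [mul_le_mul_of_nonneg_left p7a ha, mul_le_mul_of_nonneg_left q7a hb]
  · nlinarith [mul_le_mul_of_nonneg_left p7b ha, mul_le_mul_of_nonneg_left q7b hb]
  · nlinarith [mul_le_mul_of_nonneg_left p8a ha, mul_le_mul_of_nonneg_left q8a hb]
  · nlinarith [mul_le_mul_of_nonneg_left p8b ha, mul_le_mul_of_nonneg_left q8b hb]
  · nlinarith [mul_le_mul_of_nonneg_left p9 ha, mul_le_mul_of_nonneg_left q9 hb]

lemma Qset_isClosed (V : Type*) [Fintype V] : IsClosed (Qset V) := by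
  have hS : Continuous fun p : (V → ℝ) × ℝ × ℝ × ℝ => ∑ v, p.1 v :=
    continuous_finset_sum _ fun v _ => (continuous_apply v).comp continuous_fst
  have h1 : Continuous fun p : (V → ℝ) × ℝ × ℝ × ℝ => p.2.1 :=
    continuous_fst.comp continuous_snd
  have h2 : Continuous fun p : (V → ℝ) × ℝ × ℝ × ℝ => p.2.2.1 :=
    continuous_fst.comp (continuous_snd.comp continuous_snd)
  have h3 : Continuous fun p : (V → ℝ) × ℝ × ℝ × ℝ => p.2.2.2 :=
    continuous_snd.comp (continuous_snd.comp continuous_snd)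
  have hx : ∀ v : V, Continuous fun p : (V → ℝ) × ℝ × ℝ × ℝ => p.1 v :=
    fun v => (continuous_apply v).comp continuous_fst
  simp only [Qset, Set.setOf_and, Set.setOf_forall]
  refine IsClosed.inter (isClosed_le (continuous_const.mul h2) hS) ?_
  refine IsClosed.inter (isClosed_iInter fun v => isClosed_le (hx v) h1) ?_
  refine IsClosed.inter (isClosed_le h2 h1) ?_
  refine IsClosed.inter (isClosed_le ((h3.sub hS).add h1) continuous_const) ?_
  refine IsClosed.inter (isClosed_le (h1.add h2) hS) ?_
  refine IsClosed.inter (isClosed_iInter fun v =>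
    IsClosed.inter (isClosed_le continuous_const (hx v)) (isClosed_le (hx v) continuous_const)) ?_
  refine IsClosed.inter (IsClosed.inter (isClosed_le continuous_const h1)
    (isClosed_le h1 continuous_const)) ?_
  refine IsClosed.inter (IsClosed.inter (isClosed_le continuous_const h2)
    (isClosed_le h2 continuous_const)) ?_
  exact isClosed_le continuous_const h3

lemma Qset_isCompact (V : Type*) [Fintype V] : IsCompact (Qset V) := by
  have hbox : IsCompact ((Set.univ.pi fun _ : V => Set.Icc (0:ℝ) 1) ×ˢ
      (Set.Icc (0:ℝ) 1 ×ˢ (Set.Icc (0:ℝ) 1 ×ˢ Set.Icc (0:ℝ) (Fintype.card V)))) :=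
    (isCompact_univ_pi fun _ => isCompact_Icc).prod
      (isCompact_Icc.prod (isCompact_Icc.prod isCompact_Icc))
  refine hbox.of_isClosed_subset (Qset_isClosed V) ?_
  rintro ⟨x, y, y', w⟩ hp
  simp only [Qset, Set.mem_setOf_eq] at hp
  obtain ⟨c1, c2, c3, c4, c5, c6, ⟨c7a, c7b⟩, ⟨c8a, c8b⟩, c9⟩ := hp
  have hsle : ∑ v, x v ≤ (Fintype.card V : ℝ) := by
    calc ∑ v, x v ≤ ∑ _v : V, (1:ℝ) := Finset.sum_le_sum fun v _ => (c6 v).2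
    _ = (Fintype.card V : ℝ) := by simp [Finset.card_univ]
  exact ⟨fun v _ => ⟨(c6 v).1, (c6 v).2⟩, ⟨c7a, c7b⟩, ⟨c8a, c8b⟩, c9, by linarith⟩

lemma RDP_subset_Qset (V : Type*) [Fintype V] : RDPset V ⊆ Qset V := by
  rintro ⟨x, y, y', w⟩ hp
  simp only [RDPset, Set.mem_setOf_eq] at hp
  obtain ⟨hx, hy, hy', hw, h1, h4, h2, h3⟩ := hp
  have hxb : ∀ v, 0 ≤ x v ∧ x v ≤ 1 := fun v => by rcases hx v with h | h <;> rw [h] <;> norm_num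
  have hyb : 0 ≤ y ∧ y ≤ 1 := by rcases hy with h | h <;> rw [h] <;> norm_num
  have hy'b : 0 ≤ y' ∧ y' ≤ 1 := by rcases hy' with h | h <;> rw [h] <;> norm_num
  have h5 : y + y' ≤ ∑ v, x v := by
    rcases hy with h | h
    · have hsumnn : 0 ≤ ∑ v, x v := Finset.sum_nonneg fun v _ => (hxb v).1
      have hy'0 : y' ≤ 0 := h ▸ h3
      rw [h]; linarith [hy'b.1]
    · rcases hy' with h' | h'
      · rw [h, h']; linarith
      · rw [h, h']; linarith
  exact ⟨h1, h2, h3, h4, h5, hxb, hyb, hy'b, hw⟩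

lemma RDP_hull_closed (V : Type*) [Fintype V] : IsClosed (convexHull ℝ (RDPset V)) := by
  classical
  set g : (V → Bool) × Bool × Bool × Bool → (V → ℝ) × ℝ × ℝ × ℝ := fun q =>
    (fun v => if q.1 v then 1 else 0, if q.2.1 then 1 else 0, if q.2.2.1 then 1 else 0,
     if q.2.2.2 then (∑ v, (if q.1 v then (1:ℝ) else 0)) - (if q.2.1 then (1:ℝ) else 0) else 0)
    with hg
  set F : Set ((V → ℝ) × ℝ × ℝ × ℝ) := Set.range g ∩ RDPset V with hF
  have hFfin : F.Finite := (Set.finite_range g).inter_of_left _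
  have hFsub : F ⊆ RDPset V := Set.inter_subset_right
  have hSsub : RDPset V ⊆ convexHull ℝ F := by
    rintro ⟨x, y, y', w⟩ hp
    simp only [RDPset, Set.mem_setOf_eq] at hp
    obtain ⟨hx, hy, hy', hw, h1, h4, h2, h3⟩ := hp
    set xb : V → Bool := fun v => if x v = 1 then true else false with hxb
    set yb : Bool := if y = 1 then true else false with hyb
    set y'b : Bool := if y' = 1 then true else false with hy'b
    have hgx : (fun v => if xb v then (1:ℝ) else 0) = x := by
      funext v
      rcases hx v with h | h <;> simp [hxb, h]
    have hgy : (if yb then (1:ℝ) else 0) = y := by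
      rcases hy with h | h <;> simp [hyb, h]
    have hgy' : (if y'b then (1:ℝ) else 0) = y' := by
      rcases hy' with h | h <;> simp [hy'b, h]
    have hgsum : ∑ v, (if xb v then (1:ℝ) else 0) = ∑ v, x v :=
      Finset.sum_congr rfl fun v _ => congrFun hgx v
    have hsy : 0 ≤ (∑ v, x v) - y := by linarith
    have hp0 : ((x, y, y', 0) : (V → ℝ) × ℝ × ℝ × ℝ) ∈ F := by
      constructor
      · exact ⟨(xb, yb, y'b, false), by
          simp only [hg]
          exact congrArg₂ Prod.mk hgx (congrArg₂ Prod.mk hgy (congrArg₂ Prod.mk hgy' rfl))⟩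
      · exact mem_RDPset hx hy hy' (le_refl 0) h1 (by linarith) h2 h3
    have hp1 : ((x, y, y', (∑ v, x v) - y) : (V → ℝ) × ℝ × ℝ × ℝ) ∈ F := by
      constructor
      · refine ⟨(xb, yb, y'b, true), ?_⟩
        simp only [hg]
        refine congrArg₂ Prod.mk hgx (congrArg₂ Prod.mk hgy (congrArg₂ Prod.mk hgy' ?_))
        simp only [if_true, hgsum, hgy]
      · exact mem_RDPset hx hy hy' hsy h1 (by linarith) h2 h3
    rcases eq_or_lt_of_le hsy with hzero | hpos
    · have hw0 : w = 0 := by linarith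
      rw [hw0]
      exact subset_convexHull ℝ F hp0
    · set t := w / ((∑ v, x v) - y) with ht
      have ht0 : 0 ≤ t := div_nonneg hw (le_of_lt hpos)
      have ht1 : t ≤ 1 := by rw [ht, div_le_one hpos]; linarith
      have hmul : t * ((∑ v, x v) - y) = w := div_mul_cancel₀ w (ne_of_gt hpos)
      have hcomb : (1 - t) • ((x, y, y', 0) : (V → ℝ) × ℝ × ℝ × ℝ)
          + t • ((x, y, y', (∑ v, x v) - y) : (V → ℝ) × ℝ × ℝ × ℝ) = (x, y, y', w) := by
        simp only [Prod.smul_mk, Prod.mk_add_mk, smul_eq_mul, Prod.mk.injEq]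
        refine ⟨?_, by ring, by ring, by linarith [hmul]⟩
        funext v
        simp only [Pi.add_apply, Pi.smul_apply, smul_eq_mul]
        ring
      exact hcomb ▸ (convex_convexHull ℝ F) (subset_convexHull ℝ F hp0)
        (subset_convexHull ℝ F hp1) (by linarith) ht0 (by ring)
  have heq : convexHull ℝ (RDPset V) = convexHull ℝ F :=
    le_antisymm (convexHull_min hSsub (convex_convexHull ℝ F)) (convexHull_mono hFsub)
  rw [heq]
  exact hFfin.isClosed_convexHull (𝕜 := ℝ)


end Aux

theorem RDP_polytope_description (V : Type*) [Fintype V] (hV : 3 ≤ Fintype.card V) :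
    convexHull ℝ (RDPset V) =
      {p : (V → ℝ) × ℝ × ℝ × ℝ |
        2 * p.2.2.1 ≤ ∑ v, p.1 v ∧
        (∀ v, p.1 v ≤ p.2.1) ∧
        p.2.2.1 ≤ p.2.1 ∧
        p.2.2.2 - (∑ v, p.1 v) + p.2.1 ≤ 0 ∧
        p.2.1 + p.2.2.1 ≤ ∑ v, p.1 v ∧
        (∀ v, 0 ≤ p.1 v ∧ p.1 v ≤ 1) ∧
        (0 ≤ p.2.1 ∧ p.2.1 ≤ 1) ∧
        (0 ≤ p.2.2.1 ∧ p.2.2.1 ≤ 1) ∧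
        0 ≤ p.2.2.2} := by
  show convexHull ℝ (RDPset V) = Qset V
  apply Set.Subset.antisymm
  · exact convexHull_min (RDP_subset_Qset V) (Qset_convex V)
  · intro p hp
    have hKM := closure_convexHull_extremePoints (Qset_isCompact V) (Qset_convex V)
    have h3 : closure (convexHull ℝ ((Qset V).extremePoints ℝ)) ⊆ convexHull ℝ (RDPset V) :=
      closure_minimal (convexHull_mono (ext_subset V)) (RDP_hull_closed V)
    exact h3 (by rw [hKM]; exact hp)
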